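/- Let f : ℝ → ℝ be a function with 0 ≤ f ≤ 1, f nonincreasing on [0, ∞), f(0) = 1, f integrable on [0, ∞), and suppose that f(x)² = ∫_x^∞ f(s) ds for every x ≥ 0. Then f(x) = max(2 − x, 0)/2 for every x ≥ 0. -/

import Mathlib

set_option linter.unusedSectionVars false

open MeasureTheory Set Filter

section Aux

variable {f : ℝ → ℝ}
  (hrange : ∀ x, 0 ≤ f x ∧ f x ≤ 1)
  (hmono : AntitoneOn f (Set.Ici 0))
  (hint : IntegrableOn f (Set.Ici 0))
  (heq : ∀ x : ℝ, 0 ≤ x → (f x) ^ 2 = ∫ s in Set.Ioi x, f s)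

include hrange hmono hint heq

/-- Key difference identity. -/
lemma aux_diff (x y : ℝ) (hx : 0 ≤ x) (hxy : x ≤ y) :
    f x ^ 2 - f y ^ 2 = ∫ s in Set.Ioc x y, f s := by
  have hy : (0:ℝ) ≤ y := hx.trans hxy
  have hsplit : (∫ s in Set.Ioi x, f s)
      = (∫ s in Set.Ioc x y, f s) + ∫ s in Set.Ioi y, f s := by
    rw [← setIntegral_union (Set.Ioc_disjoint_Ioi le_rfl) measurableSet_Ioi
      (hint.mono_set (Set.Ioc_subset_Icc_self.trans (by
        intro t ht; exact hx.trans ht.1)))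
      (hint.mono_set (fun t ht => hy.trans (le_of_lt ht)))]
    rw [Set.Ioc_union_Ioi_eq_Ioi hxy]
  rw [heq x hx, heq y hy, hsplit]
  ring

/-- bounds on the integral. -/
lemma aux_bounds (x y : ℝ) (hx : 0 ≤ x) (hxy : x ≤ y) :
    f y * (y - x) ≤ (∫ s in Set.Ioc x y, f s) ∧
      (∫ s in Set.Ioc x y, f s) ≤ f x * (y - x) := by
  have hy : (0:ℝ) ≤ y := hx.trans hxy
  have hintxy : IntegrableOn f (Set.Ioc x y) :=
    hint.mono_set (fun t ht => hx.trans (le_of_lt ht.1))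
  have hvol : (volume (Set.Ioc x y)).toReal = y - x := by
    rw [Real.volume_Ioc, ENNReal.toReal_ofReal (by linarith)]
  constructor
  · have h1 : (∫ _ in Set.Ioc x y, f y) ≤ ∫ s in Set.Ioc x y, f s := by
      refine setIntegral_mono_on (integrableOn_const ?_) hintxy measurableSet_Ioc ?_
      · rw [Real.volume_Ioc]; exact ENNReal.ofReal_ne_top
      · intro t ht; exact hmono (hx.trans ht.1.le) hy ht.2
    rwa [setIntegral_const, smul_eq_mul, measureReal_def, hvol, mul_comm] at h1
  · have h1 : (∫ s in Set.Ioc x y, f s) ≤ ∫ _ in Set.Ioc x y, f x := by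
      refine setIntegral_mono_on hintxy (integrableOn_const ?_) measurableSet_Ioc ?_
      · rw [Real.volume_Ioc]; exact ENNReal.ofReal_ne_top
      · intro t ht; exact hmono hx (hx.trans ht.1.le) ht.1.le
    rwa [setIntegral_const, smul_eq_mul, measureReal_def, hvol, mul_comm] at h1

/-- f is continuous on [0, ∞). -/
lemma aux_cont : ContinuousOn f (Set.Ici 0) := by
  have hlip : LipschitzOnWith 1 (fun x => f x ^ 2) (Set.Ici 0) := by
    apply LipschitzOnWith.of_dist_le_mul
    intro x hx y hy
    simp only [Real.dist_eq, NNReal.coe_one, one_mul]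
    wlog hxy : y ≤ x generalizing x y
    · rw [abs_sub_comm, abs_sub_comm x y]; exact this y hy x hx (le_of_not_ge hxy)
    have hd := aux_diff hrange hmono hint heq y x hy hxy
    have hb := aux_bounds hrange hmono hint heq y x hy hxy
    have h1 := (hrange x).1
    have h2 := (hrange y).2
    have h3 := (hrange y).1
    rw [abs_sub_comm, abs_of_nonneg (by linarith : (0:ℝ) ≤ x - y), abs_le]
    constructor <;> nlinarith [hb.1, hb.2]
  have hsq : ContinuousOn (fun x => f x ^ 2) (Set.Ici 0) := hlip.continuousOn
  have : ContinuousOn (fun x => Real.sqrt (f x ^ 2)) (Set.Ici 0) :=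
    Real.continuous_sqrt.comp_continuousOn hsq
  exact this.congr fun x _ => (Real.sqrt_sq (hrange x).1).symm

/-- right derivative where positive. -/
lemma aux_deriv (y : ℝ) (hy : 0 ≤ y) (hfy : 0 < f y) :
    HasDerivWithinAt f (-(1/2)) (Set.Ici y) y := by
  rw [hasDerivWithinAt_iff_tendsto_slope, Set.Ici_sdiff_left]
  have hcf : Filter.Tendsto f (nhdsWithin y (Set.Ioi y)) (nhds (f y)) := by
    have h1 : ContinuousWithinAt f (Set.Ici 0) y := (aux_cont hrange hmono hint heq) y hy
    exact h1.tendsto.mono_left (nhdsWithin_mono y (fun z hz => hy.trans (le_of_lt hz)))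
  have hS : (f y + f y) ≠ 0 := by positivity
  have hlo : Filter.Tendsto (fun z => -f y / (f y + f z)) (nhdsWithin y (Set.Ioi y))
      (nhds (-(1/2))) := by
    have := Filter.Tendsto.div (tendsto_const_nhds (x := -f y))
      ((tendsto_const_nhds (x := f y)).add hcf) hS
    convert this using 2
    · simp only [Pi.div_apply, neg_div]
    · rw [eq_div_iff hS]; ring
  have hhi : Filter.Tendsto (fun z => -f z / (f y + f z)) (nhdsWithin y (Set.Ioi y))
      (nhds (-(1/2))) := by
    have := Filter.Tendsto.div hcf.neg
      ((tendsto_const_nhds (x := f y)).add hcf) hS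
    convert this using 2
    · simp only [Pi.div_apply, neg_div]
    · rw [eq_div_iff hS]; ring
  refine tendsto_of_tendsto_of_tendsto_of_le_of_le' hlo hhi ?_ ?_
  · refine eventually_mem_nhdsWithin.mono fun z hz => ?_
    have hz' : y < z := hz
    have hd := aux_diff hrange hmono hint heq y z hy hz'.le
    have hb := aux_bounds hrange hmono hint heq y z hy hz'.le
    have hSpos : 0 < f y + f z := by have := (hrange z).1; linarith
    have hdpos : 0 < z - y := by linarith
    rw [slope_def_field, div_le_div_iff₀ hSpos hdpos]
    nlinarith [hb.2]
  · refine eventually_mem_nhdsWithin.mono fun z hz => ?_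
    have hz' : y < z := hz
    have hd := aux_diff hrange hmono hint heq y z hy hz'.le
    have hb := aux_bounds hrange hmono hint heq y z hy hz'.le
    have hSpos : 0 < f y + f z := by have := (hrange z).1; linarith
    have hdpos : 0 < z - y := by linarith
    rw [slope_def_field, div_le_div_iff₀ hdpos hSpos]
    nlinarith [hb.1]

end Aux

theorem tail_functional_equation_unique (f : ℝ → ℝ)
    (hrange : ∀ x, 0 ≤ f x ∧ f x ≤ 1)
    (hmono : AntitoneOn f (Set.Ici 0))
    (h0 : f 0 = 1)
    (hint : IntegrableOn f (Set.Ici 0))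
    (heq : ∀ x : ℝ, 0 ≤ x → (f x) ^ 2 = ∫ s in Set.Ioi x, f s) :
    ∀ x : ℝ, 0 ≤ x → f x = max (2 - x) 0 / 2 := by
  have hcont := aux_cont hrange hmono hint heq
  -- Step A: wherever f is positive, f is the linear function 1 - x/2.
  have stepA : ∀ x : ℝ, 0 ≤ x → 0 < f x → f x = 1 - x / 2 := by
    intro x hx hfx
    have derivg : ∀ y ∈ Set.Ico (0:ℝ) x,
        HasDerivWithinAt (fun y => 1 - y / 2) (-(1/2)) (Set.Ici y) y := by
      intro y _
      exact (((hasDerivAt_id y).div_const 2).const_sub 1).hasDerivWithinAt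
    have derivf : ∀ y ∈ Set.Ico (0:ℝ) x,
        HasDerivWithinAt f (-(1/2)) (Set.Ici y) y := by
      intro y hy
      exact aux_deriv hrange hmono hint heq y hy.1
        (lt_of_lt_of_le hfx (hmono hy.1 hx hy.2.le))
    have key := eq_of_has_deriv_right_eq derivf derivg
      (hcont.mono (fun z hz => hz.1)) ((by fun_prop : Continuous fun y : ℝ => 1 - y / 2).continuousOn)
      (by simp [h0])
    have := key x (Set.right_mem_Icc.2 hx)
    simpa using this
  -- Step B: f is positive on [0, 2).
  have stepB : ∀ x : ℝ, 0 ≤ x → x < 2 → 0 < f x := by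
    intro x hx hx2
    by_contra h
    have hfx0 : f x = 0 := le_antisymm (not_lt.1 h) (hrange x).1
    set S : Set ℝ := Set.Icc 0 x ∩ f ⁻¹' {0} with hSdef
    have hclosed : IsClosed S :=
      (hcont.mono (fun z hz => hz.1)).preimage_isClosed_of_isClosed isClosed_Icc
        isClosed_singleton
    have hne : S.Nonempty := ⟨x, ⟨hx, le_rfl⟩, hfx0⟩
    have hbdd : BddBelow S := ⟨0, fun s hs => hs.1.1⟩
    set s0 := sInf S with hs0def
    have hs0 : s0 ∈ S := hclosed.csInf_mem hne hbdd
    have hfs0 : f s0 = 0 := hs0.2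
    have hs0x : s0 ≤ x := hs0.1.2
    have hs0pos : 0 < s0 := by
      rcases hs0.1.1.lt_or_eq with h' | h'
      · exact h'
      · exfalso; rw [← h', h0] at hfs0; norm_num at hfs0
    have hlin : ∀ s ∈ Set.Ico (0:ℝ) s0, f s = 1 - s / 2 := by
      intro s hs
      have hsnot : s ∉ S := notMem_of_lt_csInf hs.2 hbdd
      have hfs : f s ≠ 0 := by
        intro h'
        exact hsnot ⟨⟨hs.1, hs.2.le.trans hs0x⟩, h'⟩
      exact stepA s hs.1 (lt_of_le_of_ne (hrange s).1 (Ne.symm hfs))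
    have hnebot : (nhdsWithin s0 (Set.Ico 0 s0)).NeBot := by
      rw [← mem_closure_iff_nhdsWithin_neBot, closure_Ico (ne_of_lt hs0pos)]
      exact Set.right_mem_Icc.2 hs0pos.le
    have t1 : Filter.Tendsto f (nhdsWithin s0 (Set.Ico 0 s0)) (nhds (f s0)) :=
      (hcont s0 hs0pos.le).tendsto.mono_left (nhdsWithin_mono s0 (fun z hz => hz.1))
    have t2 : Filter.Tendsto f (nhdsWithin s0 (Set.Ico 0 s0)) (nhds (1 - s0 / 2)) := by
      have tlin : Filter.Tendsto (fun s : ℝ => 1 - s / 2) (nhdsWithin s0 (Set.Ico 0 s0))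
          (nhds (1 - s0 / 2)) :=
        ((by fun_prop : Continuous fun s : ℝ => 1 - s / 2).tendsto s0).mono_left
          nhdsWithin_le_nhds
      exact tlin.congr' (eventually_mem_nhdsWithin.mono fun s hs => (hlin s hs).symm)
    have := tendsto_nhds_unique t1 t2
    rw [hfs0] at this
    linarith
  intro x hx
  rcases lt_or_ge x 2 with h2 | h2
  · rw [stepA x hx (stepB x hx h2), max_eq_left (by linarith)]
    ring
  · have hle : ∀ s : ℝ, 0 ≤ s → s < 2 → f x ≤ 1 - s / 2 := by
      intro s hs hs2
      have h' := hmono (show s ∈ Set.Ici (0:ℝ) from hs)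
        (show x ∈ Set.Ici (0:ℝ) from hx) (by linarith)
      rwa [stepA s hs (stepB s hs hs2)] at h'
    have hfx : f x ≤ 0 := by
      by_contra h
      push_neg at h
      obtain ⟨s, hs1, hs2⟩ := exists_between
        (show max (2 - 2 * f x) 0 < 2 from max_lt (by linarith) (by norm_num))
      have h3 := hle s ((le_max_right _ _).trans hs1.le) hs2
      have h4 : 2 - 2 * f x < s := lt_of_le_of_lt (le_max_left _ _) hs1
      linarith
    rw [le_antisymm hfx (hrange x).1, max_eq_right (by linarith), zero_div]
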